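/- Assume L satisfies Hypothesis 1.1. The operator N(λ)𝓡 − i is invertible on H^{1/2}(∂Ω) if and only if λ ∈ ρ(L^N) ∩ ρ(L^{i𝓡}), and the function 𝐖₀(λ) := (N(λ)𝓡 + i)(N(λ)𝓡 − i)^{−1}, analytic on ρ(L^N) ∩ ρ(L^{i𝓡}), satisfies 𝐖₀(λ) = 2i N_{i𝓡}(λ)𝓡 − I and hence extends analytically to all of ρ(L^{i𝓡}). Moreover, for any Θ satisfying Hypothesis 4.4 the continuation 𝐖 satisfies 𝐖(λ) = −𝓡^{−1} R_{Θ,−i𝓡}(λ) R_{i𝓡,Θ}(λ) 𝓡 = 2i N_Θ(λ) R_{i𝓡,Θ}(λ) 𝓡 − I for all λ ∈ ρ(L^{i𝓡}) ∩ ρ(L^Θ). -/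

import Mathlib

/-!
Theorem 7.1 (the complex Souriau map and its analytic continuation).
Abstraction: `sol z` is the set of weak solutions of `Lu = zu` in `H¹(Ω)`,
`pr` the duality pairing, `𝓡` the Riesz isomorphism
`H^{1/2}(∂Ω) → H^{-1/2}(∂Ω)`, resolvent membership is expressed via unique
solvability, and the Robin-to-Dirichlet / Robin-to-Robin families are
characterized by their defining properties and are analytic on the
corresponding resolvent sets.  `(N(λ)𝓡 - i)⁻¹` is expressed via
`Ring.inverse`.
-/

open Complex Topology Filter Set

noncomputable section
namespace Evans

variable {Hb Hb' : Type*} [NormedAddCommGroup Hb] [InnerProductSpace ℂ Hb] [CompleteSpace Hb]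
  [NormedAddCommGroup Hb'] [NormedSpace ℂ Hb']
variable {H1 : Type*} [AddCommGroup H1] [Module ℂ H1]

/-- unique solvability of the Robin problem, i.e. `z ∈ ρ(𝓛^Θ)`. -/
def RobinRegular (sol : ℂ → Set H1) (γD : H1 →ₗ[ℂ] Hb) (γN : H1 →ₗ[ℂ] Hb')
    (Θ : Hb →L[ℂ] Hb') (z : ℂ) : Prop :=
  ∀ g : Hb', ∃! u, u ∈ sol z ∧ γN u + Θ (γD u) = g

/-- `N` is the Robin-to-Dirichlet map `N_Θ(z)`. -/
def IsRtD (sol : ℂ → Set H1) (γD : H1 →ₗ[ℂ] Hb) (γN : H1 →ₗ[ℂ] Hb')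
    (Θ : Hb →L[ℂ] Hb') (N : Hb' →L[ℂ] Hb) (z : ℂ) : Prop :=
  ∀ g : Hb', ∃ u, u ∈ sol z ∧ γN u + Θ (γD u) = g ∧ N g = γD u

/-- `R` is the Robin-to-Robin map `R_{Θ₁,Θ₂}(z)`. -/
def IsRtR (sol : ℂ → Set H1) (γD : H1 →ₗ[ℂ] Hb) (γN : H1 →ₗ[ℂ] Hb')
    (Θ₁ Θ₂ : Hb →L[ℂ] Hb') (R : Hb' →L[ℂ] Hb') (z : ℂ) : Prop :=
  ∀ g : Hb', ∃ u, u ∈ sol z ∧ γN u + Θ₁ (γD u) = g ∧ R g = γN u + Θ₂ (γD u)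

omit [CompleteSpace Hb] in
lemma rtd_apply {sol : ℂ → Set H1} {γD : H1 →ₗ[ℂ] Hb} {γN : H1 →ₗ[ℂ] Hb'}
    {Θ : Hb →L[ℂ] Hb'} {M : Hb' →L[ℂ] Hb} {z : ℂ}
    (hreg : RobinRegular sol γD γN Θ z) (hM : IsRtD sol γD γN Θ M z)
    {u : H1} (hu : u ∈ sol z) : M (γN u + Θ (γD u)) = γD u := by
  obtain ⟨v, hv, hvd, hMv⟩ := hM (γN u + Θ (γD u))
  obtain ⟨w, hw, huniq⟩ := hreg (γN u + Θ (γD u))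
  have hvu : v = u := (huniq v ⟨hv, hvd⟩).trans (huniq u ⟨hu, rfl⟩).symm
  rw [hMv, hvu]

omit [CompleteSpace Hb] in
lemma rtr_apply {sol : ℂ → Set H1} {γD : H1 →ₗ[ℂ] Hb} {γN : H1 →ₗ[ℂ] Hb'}
    {Θ₁ Θ₂ : Hb →L[ℂ] Hb'} {R : Hb' →L[ℂ] Hb'} {z : ℂ}
    (hreg : RobinRegular sol γD γN Θ₁ z) (hR : IsRtR sol γD γN Θ₁ Θ₂ R z)
    {u : H1} (hu : u ∈ sol z) : R (γN u + Θ₁ (γD u)) = γN u + Θ₂ (γD u) := by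
  obtain ⟨v, hv, hvd, hRv⟩ := hR (γN u + Θ₁ (γD u))
  obtain ⟨w, hw, huniq⟩ := hreg (γN u + Θ₁ (γD u))
  have hvu : v = u := (huniq v ⟨hv, hvd⟩).trans (huniq u ⟨hu, rfl⟩).symm
  rw [hRv, hvu]

/-- **Theorem 7.1.** -/
theorem thm_cont
    (sol : ℂ → Set H1) (γD : H1 →ₗ[ℂ] Hb) (γN : H1 →ₗ[ℂ] Hb')
    (pr : Hb' → Hb → ℂ)
    -- the Riesz isomorphism 𝓡 : H^{1/2}(∂Ω) → H^{-1/2}(∂Ω), ⟪𝓡f, g⟫ = ⟨f,g⟩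
    (𝓡 : Hb ≃L[ℂ] Hb')
    (h𝓡 : ∀ f g : Hb, pr (𝓡 f) g = (inner ℂ g f : ℂ))
    -- the Neumann-to-Dirichlet family N = N₀
    (N : ℂ → (Hb' →L[ℂ] Hb))
    (hN : ∀ z, RobinRegular sol γD γN 0 z → IsRtD sol γD γN 0 (N z) z)
    (hNana : ∀ z, RobinRegular sol γD γN 0 z → AnalyticAt ℂ N z)
    -- the Robin-to-Dirichlet family N_{i𝓡}
    (Ni𝓡 : ℂ → (Hb' →L[ℂ] Hb))
    (hNi𝓡 : ∀ z, RobinRegular sol γD γN (Complex.I • (𝓡 : Hb →L[ℂ] Hb')) z →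
      IsRtD sol γD γN (Complex.I • (𝓡 : Hb →L[ℂ] Hb')) (Ni𝓡 z) z)
    (hNi𝓡ana : ∀ z, RobinRegular sol γD γN (Complex.I • (𝓡 : Hb →L[ℂ] Hb')) z →
      AnalyticAt ℂ Ni𝓡 z)
    -- an arbitrary boundary operator Θ satisfying Hypothesis 4.4, with the
    -- associated Robin-to-Dirichlet and Robin-to-Robin families
    (Θ : Hb →L[ℂ] Hb')
    (NΘ : ℂ → (Hb' →L[ℂ] Hb))
    (hNΘ : ∀ z, RobinRegular sol γD γN Θ z → IsRtD sol γD γN Θ (NΘ z) z)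
    (RΘmi : ℂ → (Hb' →L[ℂ] Hb'))   -- R_{Θ, -i𝓡}
    (hRΘmi : ∀ z, RobinRegular sol γD γN Θ z →
      IsRtR sol γD γN Θ (-(Complex.I • (𝓡 : Hb →L[ℂ] Hb'))) (RΘmi z) z)
    (Ri𝓡Θ : ℂ → (Hb' →L[ℂ] Hb'))   -- R_{i𝓡, Θ}
    (hRi𝓡Θ : ∀ z, RobinRegular sol γD γN (Complex.I • (𝓡 : Hb →L[ℂ] Hb')) z →
      IsRtR sol γD γN (Complex.I • (𝓡 : Hb →L[ℂ] Hb')) Θ (Ri𝓡Θ z) z) :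
    -- N(λ)𝓡 - i is invertible iff λ ∈ ρ(𝓛^N) ∩ ρ(𝓛^{i𝓡})
    (∀ z, RobinRegular sol γD γN 0 z →
      (Function.Bijective
          ((N z).comp (𝓡 : Hb →L[ℂ] Hb') - Complex.I • (1 : Hb →L[ℂ] Hb)) ↔
        RobinRegular sol γD γN (Complex.I • (𝓡 : Hb →L[ℂ] Hb')) z)) ∧
    -- 𝐖₀(λ) = (N(λ)𝓡 + i)(N(λ)𝓡 - i)⁻¹ = 2i N_{i𝓡}(λ)𝓡 - I on ρ(𝓛^N) ∩ ρ(𝓛^{i𝓡})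
    (∀ z, RobinRegular sol γD γN 0 z →
      RobinRegular sol γD γN (Complex.I • (𝓡 : Hb →L[ℂ] Hb')) z →
      ((N z).comp (𝓡 : Hb →L[ℂ] Hb') + Complex.I • (1 : Hb →L[ℂ] Hb)) *
          Ring.inverse
            ((N z).comp (𝓡 : Hb →L[ℂ] Hb') - Complex.I • (1 : Hb →L[ℂ] Hb)) =
        (2 * Complex.I) • ((Ni𝓡 z).comp (𝓡 : Hb →L[ℂ] Hb')) - 1) ∧
    -- hence 𝐖(λ) := 2i N_{i𝓡}(λ)𝓡 - I is analytic on all of ρ(𝓛^{i𝓡})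
    (∀ z, RobinRegular sol γD γN (Complex.I • (𝓡 : Hb →L[ℂ] Hb')) z →
      AnalyticAt ℂ
        (fun w => (2 * Complex.I) • ((Ni𝓡 w).comp (𝓡 : Hb →L[ℂ] Hb')) -
          (1 : Hb →L[ℂ] Hb)) z) ∧
    -- 𝐖(λ) = -𝓡⁻¹ R_{Θ,-i𝓡}(λ) R_{i𝓡,Θ}(λ) 𝓡 = 2i N_Θ(λ) R_{i𝓡,Θ}(λ) 𝓡 - I
    -- for all λ ∈ ρ(𝓛^{i𝓡}) ∩ ρ(𝓛^Θ)
    (∀ z, RobinRegular sol γD γN (Complex.I • (𝓡 : Hb →L[ℂ] Hb')) z →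
      RobinRegular sol γD γN Θ z →
      ((2 * Complex.I) • ((Ni𝓡 z).comp (𝓡 : Hb →L[ℂ] Hb')) - 1 =
        -((𝓡.symm : Hb' →L[ℂ] Hb).comp
            (((RΘmi z).comp (Ri𝓡Θ z)).comp (𝓡 : Hb →L[ℂ] Hb'))) ∧
       (2 * Complex.I) • ((Ni𝓡 z).comp (𝓡 : Hb →L[ℂ] Hb')) - 1 =
        (2 * Complex.I) • ((NΘ z).comp ((Ri𝓡Θ z).comp (𝓡 : Hb →L[ℂ] Hb'))) - 1)) := by
  -- Dirichlet data of any solution is `N z` of its Neumann data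
  have hND : ∀ z, RobinRegular sol γD γN 0 z → ∀ u ∈ sol z, γD u = N z (γN u) := by
    intro z hz u hu
    have h := rtd_apply hz (hN z hz) hu
    simpa using h.symm
  -- Part 1
  have key : ∀ z, RobinRegular sol γD γN 0 z →
      (Function.Bijective
          ((N z).comp (𝓡 : Hb →L[ℂ] Hb') - Complex.I • (1 : Hb →L[ℂ] Hb)) ↔
        RobinRegular sol γD γN (Complex.I • (𝓡 : Hb →L[ℂ] Hb')) z) := by
    intro z hz0
    constructor
    · intro hA g
      obtain ⟨x, hx⟩ := hA.2 (-(Complex.I • 𝓡.symm g))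
      have hx' : N z (𝓡 x) - Complex.I • x = -(Complex.I • 𝓡.symm g) := by
        simpa using hx
      have hNzx : N z (𝓡 x) = Complex.I • x - Complex.I • 𝓡.symm g := by
        linear_combination (norm := module) hx'
      obtain ⟨u, ⟨hu, hγNu⟩, hunique⟩ := hz0 (𝓡 x)
      have hγNu' : γN u = 𝓡 x := by simpa using hγNu
      have hγDu : γD u = N z (𝓡 x) := by rw [← hγNu']; exact hND z hz0 u hu
      have hdata : γN u + (Complex.I • (𝓡 : Hb →L[ℂ] Hb')) (γD u) = g := by
        rw [hγNu']
        simp only [ContinuousLinearMap.smul_apply, ContinuousLinearEquiv.coe_coe]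
        rw [hγDu, hNzx]
        simp [smul_sub, smul_smul, Complex.I_mul_I]
      refine ⟨u, ⟨hu, hdata⟩, ?_⟩
      rintro v ⟨hv, hvdata⟩
      have hγDv : γD v = N z (γN v) := hND z hz0 v hv
      have hvdata' : γN v + Complex.I • (𝓡 (γD v)) = g := by
        simpa using hvdata
      have hAv : ((N z).comp (𝓡 : Hb →L[ℂ] Hb') - Complex.I • (1 : Hb →L[ℂ] Hb))
          (𝓡.symm (γN v)) = -(Complex.I • 𝓡.symm g) := by
        simp only [ContinuousLinearMap.sub_apply, ContinuousLinearMap.coe_comp',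
          Function.comp_apply, ContinuousLinearEquiv.coe_coe,
          ContinuousLinearMap.smul_apply, ContinuousLinearMap.one_apply,
          ContinuousLinearEquiv.apply_symm_apply]
        rw [← hγDv]
        have := congrArg (fun w => -(Complex.I • 𝓡.symm w)) hvdata'
        simp only [map_add, map_smul, smul_add, smul_smul,
          ContinuousLinearEquiv.symm_apply_apply, Complex.I_mul_I, neg_add,
          neg_smul, neg_neg, one_smul] at this
        linear_combination (norm := module) this
      have hxv : 𝓡.symm (γN v) = x := hA.1 (hAv.trans hx.symm)
      have : γN v = 𝓡 x := by rw [← hxv, ContinuousLinearEquiv.apply_symm_apply]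
      exact hunique v ⟨hv, by simpa using this⟩
    · intro hreg'
      constructor
      · intro x₁ x₂ hx
        obtain ⟨u₁, ⟨hu₁, hd₁⟩, _⟩ := hz0 (𝓡 x₁)
        obtain ⟨u₂, ⟨hu₂, hd₂⟩, _⟩ := hz0 (𝓡 x₂)
        have hN₁ : γN u₁ = 𝓡 x₁ := by simpa using hd₁
        have hN₂ : γN u₂ = 𝓡 x₂ := by simpa using hd₂
        have hD₁ : γD u₁ = N z (𝓡 x₁) := by rw [← hN₁]; exact hND z hz0 u₁ hu₁
        have hD₂ : γD u₂ = N z (𝓡 x₂) := by rw [← hN₂]; exact hND z hz0 u₂ hu₂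
        have hx' : N z (𝓡 x₁) - Complex.I • x₁ = N z (𝓡 x₂) - Complex.I • x₂ := by
          simpa using hx
        have hgg : γN u₁ + (Complex.I • (𝓡 : Hb →L[ℂ] Hb')) (γD u₁)
            = γN u₂ + (Complex.I • (𝓡 : Hb →L[ℂ] Hb')) (γD u₂) := by
          simp only [ContinuousLinearMap.smul_apply, ContinuousLinearEquiv.coe_coe]
          rw [hN₁, hN₂, hD₁, hD₂]
          have := congrArg (fun w => Complex.I • (𝓡 : Hb →L[ℂ] Hb') w) hx'
          simp only [map_sub, map_smul, smul_sub, smul_smul, Complex.I_mul_I,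
            neg_smul, one_smul, ContinuousLinearEquiv.coe_coe] at this
          linear_combination (norm := module) this
        obtain ⟨w, hw, huniq⟩ := hreg' (γN u₁ + (Complex.I • (𝓡 : Hb →L[ℂ] Hb')) (γD u₁))
        have hu12 : u₁ = u₂ :=
          (huniq u₁ ⟨hu₁, rfl⟩).trans (huniq u₂ ⟨hu₂, hgg.symm⟩).symm
        apply 𝓡.injective
        rw [← hN₁, ← hN₂, hu12]
      · intro y
        obtain ⟨u, ⟨hu, hdata⟩, _⟩ := hreg' (Complex.I • 𝓡 y)
        have hdata' : γN u + Complex.I • 𝓡 (γD u) = Complex.I • 𝓡 y := by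
          simpa using hdata
        refine ⟨𝓡.symm (γN u), ?_⟩
        have hγD : γD u = N z (γN u) := hND z hz0 u hu
        simp only [ContinuousLinearMap.sub_apply, ContinuousLinearMap.coe_comp',
          Function.comp_apply, ContinuousLinearEquiv.coe_coe,
          ContinuousLinearMap.smul_apply, ContinuousLinearMap.one_apply,
          ContinuousLinearEquiv.apply_symm_apply]
        rw [← hγD]
        have := congrArg (fun w => -(Complex.I • 𝓡.symm w)) hdata'
        simp only [map_add, map_smul, smul_add, smul_smul,
          ContinuousLinearEquiv.symm_apply_apply, Complex.I_mul_I, neg_add,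
          neg_smul, neg_neg, one_smul] at this
        linear_combination (norm := module) this
  refine ⟨key, ?_, ?_, ?_⟩
  -- Part 2
  · intro z hz0 hzI
    have hAbij := (key z hz0).mpr hzI
    set A := (N z).comp (𝓡 : Hb →L[ℂ] Hb') - Complex.I • (1 : Hb →L[ℂ] Hb) with hAdef
    have hunit : IsUnit A := by
      let e := ContinuousLinearEquiv.ofBijective A
        (LinearMap.ker_eq_bot.mpr hAbij.1) (LinearMap.range_eq_top.mpr hAbij.2)
      refine ⟨⟨A, (e.symm : Hb →L[ℂ] Hb), ?_, ?_⟩, rfl⟩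
      · ext x
        show A ((e.symm : Hb →L[ℂ] Hb) x) = x
        exact e.apply_symm_apply x
      · ext x
        show (e.symm : Hb →L[ℂ] Hb) (A x) = x
        exact e.symm_apply_apply x
    have hWA : ((2 * Complex.I) • ((Ni𝓡 z).comp (𝓡 : Hb →L[ℂ] Hb')) - 1) * A
        = (N z).comp (𝓡 : Hb →L[ℂ] Hb') + Complex.I • (1 : Hb →L[ℂ] Hb) := by
      ext x
      obtain ⟨u, ⟨hu, hγNu⟩, _⟩ := hz0 (𝓡 x)
      have hγNu' : γN u = 𝓡 x := by simpa using hγNu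
      have hγDu : N z (𝓡 x) = γD u := by rw [← hγNu']; exact (hND z hz0 u hu).symm
      have hAx : A x = γD u - Complex.I • x := by
        simp [hAdef, ContinuousLinearMap.sub_apply, hγDu]
      have harg : (𝓡 : Hb →L[ℂ] Hb') (A x)
          = (-Complex.I) • (γN u + (Complex.I • (𝓡 : Hb →L[ℂ] Hb')) (γD u)) := by
        simp only [ContinuousLinearEquiv.coe_coe, hAx, map_sub, map_smul,
          ContinuousLinearMap.smul_apply, smul_add, smul_smul, neg_mul,
          Complex.I_mul_I, neg_neg, one_smul, hγNu', neg_smul]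
        module
      have hNikey : Ni𝓡 z ((𝓡 : Hb →L[ℂ] Hb') (A x)) = (-Complex.I) • γD u := by
        rw [harg, map_smul, rtd_apply hzI (hNi𝓡 z hzI) hu]
      simp only [ContinuousLinearMap.mul_apply, ContinuousLinearMap.sub_apply,
        ContinuousLinearMap.add_apply, ContinuousLinearMap.smul_apply,
        ContinuousLinearMap.one_apply, ContinuousLinearMap.coe_comp',
        Function.comp_apply, ContinuousLinearEquiv.coe_coe]
      rw [show (𝓡 : Hb →L[ℂ] Hb') (A x) = 𝓡 (A x) from rfl] at hNikey
      rw [hNikey, hAx, hγDu]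
      rw [smul_smul, show (2 * Complex.I) * (-Complex.I) = 2 by
        rw [mul_neg, mul_assoc, Complex.I_mul_I]; ring]
      module
    rw [← hWA, mul_assoc, Ring.mul_inverse_cancel A hunit, mul_one]
  -- Part 3
  · intro z hz
    have h1 : AnalyticAt ℂ Ni𝓡 z := hNi𝓡ana z hz
    let φ : (Hb' →L[ℂ] Hb) →L[ℂ] (Hb →L[ℂ] Hb) :=
      (ContinuousLinearMap.compL ℂ Hb Hb' Hb).flip (𝓡 : Hb →L[ℂ] Hb')
    have h2 : AnalyticAt ℂ (fun w => φ (Ni𝓡 w)) z := (φ.analyticAt _).comp h1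
    have h3 : AnalyticAt ℂ
        (fun w => (2 * Complex.I) • φ (Ni𝓡 w) - (1 : Hb →L[ℂ] Hb)) z :=
      ((analyticAt_const (v := 2 * Complex.I)).smul h2).sub
        (analyticAt_const (v := (1 : Hb →L[ℂ] Hb)))
    exact h3
  -- Part 4
  · intro z hzI hzΘ
    have common : ∀ x : Hb, ∃ u, u ∈ sol z ∧
        γN u + Complex.I • 𝓡 (γD u) = 𝓡 x ∧ Ni𝓡 z (𝓡 x) = γD u ∧
        Ri𝓡Θ z (𝓡 x) = γN u + Θ (γD u) ∧
        x = 𝓡.symm (γN u) + Complex.I • γD u := by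
      intro x
      obtain ⟨u, hu, hdata, hRg⟩ := hRi𝓡Θ z hzI ((𝓡 : Hb →L[ℂ] Hb') x)
      have hdata' : γN u + Complex.I • 𝓡 (γD u) = 𝓡 x := by simpa using hdata
      have hNi : Ni𝓡 z (𝓡 x) = γD u := by
        rw [← hdata']
        simpa using rtd_apply hzI (hNi𝓡 z hzI) hu
      have hRg' : Ri𝓡Θ z (𝓡 x) = γN u + Θ (γD u) := by simpa using hRg
      have hxeq : x = 𝓡.symm (γN u) + Complex.I • γD u := by
        apply 𝓡.injective
        rw [map_add, map_smul, ContinuousLinearEquiv.apply_symm_apply, hdata']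
      exact ⟨u, hu, hdata', hNi, hRg', hxeq⟩
    constructor
    · ext x
      obtain ⟨u, hu, hdata', hNi, hRg', hxeq⟩ := common x
      have hRR : RΘmi z (γN u + Θ (γD u)) = γN u + -(Complex.I • 𝓡 (γD u)) := by
        simpa using rtr_apply hzΘ (hRΘmi z hzΘ) hu
      simp only [ContinuousLinearMap.sub_apply, ContinuousLinearMap.smul_apply,
        ContinuousLinearMap.one_apply, ContinuousLinearMap.coe_comp',
        Function.comp_apply, ContinuousLinearEquiv.coe_coe,
        ContinuousLinearMap.neg_apply, hNi, hRg', hRR]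
      rw [map_add, map_neg, map_smul, ContinuousLinearEquiv.symm_apply_apply, hxeq]
      module
    · ext x
      obtain ⟨u, hu, hdata', hNi, hRg', hxeq⟩ := common x
      have hNT : NΘ z (γN u + Θ (γD u)) = γD u := rtd_apply hzΘ (hNΘ z hzΘ) hu
      simp only [ContinuousLinearMap.sub_apply, ContinuousLinearMap.smul_apply,
        ContinuousLinearMap.one_apply, ContinuousLinearMap.coe_comp',
        Function.comp_apply, ContinuousLinearEquiv.coe_coe, hNi, hRg', hNT]

end Evans
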